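/- Let ℓ ≥ 2. The map n ↦ f_n^ℓ = {F_n, F_{n+1}, …, F_{n+ℓ-1}} from (ℕ, |·|) to (X^ℓ, d^ℓ) is a (1,1)-quasi-isometric embedding: for all natural numbers m, n ≥ 1, |m - n| - 1 ≤ d^ℓ(f_m^ℓ, f_n^ℓ) ≤ |m - n| + 1. -/

import Mathlib

/-- `Q s m` is the minimum of `∑ |xᵢ|` over integer solutions of `m = ∑_{i ∈ s} i·xᵢ`. -/
noncomputable def Q (s : Finset ℕ) (m : ℕ) : ℕ :=
  sInf {t : ℕ | ∃ x : ℕ → ℤ, (m : ℤ) = ∑ i ∈ s, (i : ℤ) * x i ∧ t = ∑ i ∈ s, (x i).natAbs}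

/-- `QSet n m = max_{x ∈ m} Q n x`, i.e. `q_𝐧(𝐦)` for finite sets `𝐧, 𝐦 ⊆ ℕ`. -/
noncomputable def QSet (nset mset : Finset ℕ) : ℕ := mset.sup fun x => Q nset x

/-- `dL 𝐦 𝐧 = log_φ (max (q_𝐧(𝐦), q_𝐦(𝐧)))`, where `φ = (1+√5)/2`. -/
noncomputable def dL (mset nset : Finset ℕ) : ℝ :=
  Real.logb ((1 + Real.sqrt 5) / 2) (max (QSet nset mset) (QSet mset nset))

/-- `fibSet n ℓ = {F_n, F_{n+1}, …, F_{n+ℓ-1}}` as a set of natural numbers. -/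
def fibSet (n ℓ : ℕ) : Finset ℕ := (Finset.range ℓ).image fun i => Nat.fib (n + i)

open Finset Real goldenRatio

lemma sum_two (s : Finset ℕ) {a b : ℕ} (ha : a ∈ s) (hb : b ∈ s) (c₁ c₂ : ℤ) :
    ∃ x : ℕ → ℤ, (∑ i ∈ s, (i : ℤ) * x i) = a * c₁ + b * c₂ ∧
      (∑ i ∈ s, (x i).natAbs) ≤ c₁.natAbs + c₂.natAbs := by
  rcases eq_or_ne a b with rfl | hab
  · refine ⟨fun v => if v = a then c₁ + c₂ else 0, ?_, ?_⟩
    · rw [Finset.sum_eq_single a (fun i _ hi => by simp [hi]) (fun h => absurd ha h)]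
      simp [mul_add]
    · rw [Finset.sum_eq_single a (fun i _ hi => by simp [hi]) (fun h => absurd ha h)]
      simpa using Int.natAbs_add_le c₁ c₂
  · have hsub : ({a, b} : Finset ℕ) ⊆ s := Finset.insert_subset ha (Finset.singleton_subset_iff.2 hb)
    refine ⟨fun v => if v = a then c₁ else if v = b then c₂ else 0, ?_, ?_⟩
    · have hz : ∀ i ∈ s, i ∉ ({a, b} : Finset ℕ) →
          (i : ℤ) * (if i = a then c₁ else if i = b then c₂ else 0) = 0 := by
        intro i _ hi
        simp only [Finset.mem_insert, Finset.mem_singleton, not_or] at hi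
        simp [hi.1, hi.2]
      rw [← Finset.sum_subset hsub hz, Finset.sum_pair hab]
      simp [hab, Ne.symm hab]
    · have hz : ∀ i ∈ s, i ∉ ({a, b} : Finset ℕ) →
          ((if i = a then c₁ else if i = b then c₂ else 0) : ℤ).natAbs = 0 := by
        intro i _ hi
        simp only [Finset.mem_insert, Finset.mem_singleton, not_or] at hi
        simp [hi.1, hi.2]
      rw [← Finset.sum_subset hsub hz, Finset.sum_pair hab]
      simp [hab, Ne.symm hab]

lemma Q_le_two (s : Finset ℕ) {a b : ℕ} (ha : a ∈ s) (hb : b ∈ s) (c₁ c₂ : ℤ) (m : ℕ)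
    (h : (m : ℤ) = a * c₁ + b * c₂) : Q s m ≤ c₁.natAbs + c₂.natAbs := by
  obtain ⟨x, hx1, hx2⟩ := sum_two s ha hb c₁ c₂
  exact le_trans (Nat.sInf_le ⟨x, by rw [h, hx1], rfl⟩) hx2

lemma Q_set_nonempty (s : Finset ℕ) {a b : ℕ} (ha : a ∈ s) (hb : b ∈ s)
    (hcop : Nat.Coprime a b) (m : ℕ) :
    {t : ℕ | ∃ x : ℕ → ℤ, (m : ℤ) = ∑ i ∈ s, (i : ℤ) * x i ∧
      t = ∑ i ∈ s, (x i).natAbs}.Nonempty := by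
  have h1 : (a : ℤ) * Nat.gcdA a b + b * Nat.gcdB a b = 1 := by
    have h := (Nat.gcd_eq_gcd_ab a b).symm
    rwa [hcop, Nat.cast_one] at h
  obtain ⟨x, hx1, _⟩ := sum_two s ha hb ((m : ℤ) * Nat.gcdA a b) ((m : ℤ) * Nat.gcdB a b)
  exact ⟨_, x, by rw [hx1]; linear_combination (-(m : ℤ)) * h1, rfl⟩

lemma Q_ge {s : Finset ℕ} {m B : ℕ}
    (hne : {t : ℕ | ∃ x : ℕ → ℤ, (m : ℤ) = ∑ i ∈ s, (i : ℤ) * x i ∧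
      t = ∑ i ∈ s, (x i).natAbs}.Nonempty)
    (h : ∀ x : ℕ → ℤ, (m : ℤ) = ∑ i ∈ s, (i : ℤ) * x i → B ≤ ∑ i ∈ s, (x i).natAbs) :
    B ≤ Q s m := by
  obtain ⟨x, hx, ht⟩ := Nat.sInf_mem hne
  simp only [Q]
  rw [ht]
  exact h x hx

lemma fibL (b c : ℕ) : (Nat.fib b : ℤ) * Nat.fib (c + b + 1) - Nat.fib (b + 1) * Nat.fib (c + b)
    = (-1) ^ (b + 1) * Nat.fib c := by
  induction b with
  | zero => simp
  | succ k ih =>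
    have e1 : (Nat.fib (k + 2) : ℤ) = Nat.fib k + Nat.fib (k + 1) := by
      norm_cast; exact Nat.fib_add_two
    have e2 : (Nat.fib (c + k + 2) : ℤ) = Nat.fib (c + k) + Nat.fib (c + k + 1) := by
      norm_cast; exact Nat.fib_add_two
    show (Nat.fib (k + 1) : ℤ) * Nat.fib (c + k + 2) - Nat.fib (k + 2) * Nat.fib (c + k + 1)
      = (-1) ^ (k + 2) * Nat.fib c
    linear_combination (-(Nat.fib (c + k + 1) : ℤ)) * e1 + (Nat.fib (k + 1) : ℤ) * e2 - ih

lemma fib_le_pow (k : ℕ) : (Nat.fib (k + 1) : ℝ) ≤ goldenRatio ^ k := by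
  induction k using Nat.twoStepInduction with
  | zero => simp
  | one => simpa using one_lt_goldenRatio.le
  | more k ih1 ih2 =>
    have h := goldenRatio_pow_sub_goldenRatio_pow k
    have e : (Nat.fib (k + 3) : ℝ) = Nat.fib (k + 1) + Nat.fib (k + 2) := by
      norm_cast; exact Nat.fib_add_two
    rw [e]
    linarith

lemma pow_le_fib (k : ℕ) : goldenRatio ^ k ≤ (Nat.fib (k + 2) : ℝ) := by
  induction k using Nat.twoStepInduction with
  | zero => simp
  | one => simpa [show Nat.fib 3 = 2 from rfl] using goldenRatio_lt_two.le
  | more k ih1 ih2 =>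
    have h := goldenRatio_pow_sub_goldenRatio_pow k
    have e : (Nat.fib (k + 4) : ℝ) = Nat.fib (k + 2) + Nat.fib (k + 3) := by
      norm_cast; exact Nat.fib_add_two
    rw [e]
    linarith

lemma mem_fibSet {n ℓ i : ℕ} (hi : i < ℓ) : Nat.fib (n + i) ∈ fibSet n ℓ :=
  Finset.mem_image.2 ⟨i, Finset.mem_range.2 hi, rfl⟩

lemma QSet_upper_A (n d L : ℕ) :
    QSet (fibSet n (L + 2)) (fibSet (n + d) (L + 2)) ≤ Nat.fib (d + 2) := by
  refine Finset.sup_le ?_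
  intro v hv
  obtain ⟨i, hi, rfl⟩ := Finset.mem_image.1 hv
  rw [Finset.mem_range] at hi
  rcases d with _ | e
  · -- d = 0 : trivial representation
    have h := Q_le_two (fibSet n (L + 2)) (mem_fibSet hi) (mem_fibSet hi) 1 0
      (Nat.fib (n + 0 + i)) (by rw [show n + 0 + i = n + i from by omega]; push_cast; ring)
    simpa using le_trans h (by simp [Nat.fib_add_two])
  · rcases i with _ | j
    · -- i = 0
      have h0 := Nat.fib_add n e
      have heq : (Nat.fib (n + (e + 1) + 0) : ℤ)
          = (Nat.fib (n + 0) : ℤ) * (Nat.fib e : ℤ) + (Nat.fib (n + 1) : ℤ) * (Nat.fib (e + 1) : ℤ) := by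
        rw [show n + (e + 1) + 0 = n + e + 1 from by omega, show n + 0 = n from by omega]
        exact_mod_cast h0
      have h := Q_le_two (fibSet n (L + 2)) (mem_fibSet (show 0 < L + 2 by omega))
        (mem_fibSet (show 1 < L + 2 by omega)) _ _ _ heq
      refine le_trans h ?_
      simp only [Int.natAbs_natCast]
      calc Nat.fib e + Nat.fib (e + 1) = Nat.fib (e + 2) := Nat.fib_add_two.symm
        _ ≤ Nat.fib (e + 3) := Nat.fib_le_fib_succ
    · -- i = j + 1
      have h0 := Nat.fib_add (n + j) (e + 1)
      have heq : (Nat.fib (n + (e + 1) + (j + 1)) : ℤ)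
          = (Nat.fib (n + j) : ℤ) * (Nat.fib (e + 1) : ℤ)
            + (Nat.fib (n + (j + 1)) : ℤ) * (Nat.fib (e + 2) : ℤ) := by
        rw [show n + (e + 1) + (j + 1) = n + j + (e + 1) + 1 from by omega,
          show n + (j + 1) = n + j + 1 from by omega]
        exact_mod_cast h0
      have h := Q_le_two (fibSet n (L + 2)) (mem_fibSet (show j < L + 2 by omega))
        (mem_fibSet hi) _ _ _ heq
      refine le_trans h ?_
      simp only [Int.natAbs_natCast]
      calc Nat.fib (e + 1) + Nat.fib (e + 2) = Nat.fib (e + 3) := Nat.fib_add_two.symm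
        _ ≤ Nat.fib (e + 3) := le_rfl

lemma QSet_upper_B (n d L : ℕ) :
    QSet (fibSet (n + d) (L + 2)) (fibSet n (L + 2)) ≤ Nat.fib (d + 2) := by
  refine Finset.sup_le ?_
  intro v hv
  obtain ⟨i, hi, rfl⟩ := Finset.mem_image.1 hv
  rw [Finset.mem_range] at hi
  rcases d with _ | e
  · have h := Q_le_two (fibSet (n + 0) (L + 2)) (mem_fibSet hi) (mem_fibSet hi) 1 0
      (Nat.fib (n + i)) (by rw [show n + 0 + i = n + i from by omega]; push_cast; ring)
    simpa using le_trans h (by simp [Nat.fib_add_two])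
  · have hs : ((-1 : ℤ) ^ (e + 2)) * ((-1 : ℤ) ^ (e + 2)) = 1 := by
      rw [← pow_add]; exact Even.neg_one_pow ⟨e + 2, by ring⟩
    rcases i with _ | j
    · -- i = 0 : use fibL (e+1) n
      have hL := fibL (e + 1) n
      have heq : (Nat.fib (n + 0) : ℤ)
          = (Nat.fib (n + (e + 1) + 1) : ℤ) * ((-1 : ℤ) ^ (e + 2) * (Nat.fib (e + 1) : ℤ))
            + (Nat.fib (n + (e + 1) + 0) : ℤ) * (-((-1 : ℤ) ^ (e + 2)) * (Nat.fib (e + 2) : ℤ)) := by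
        rw [show n + (e + 1) + 1 = n + (e + 1) + 1 from rfl, show n + (e + 1) + 0 = n + (e + 1) from by omega,
          show n + 0 = n from by omega]
        linear_combination (-((-1 : ℤ) ^ (e + 2))) * hL - (Nat.fib n : ℤ) * hs
      have h := Q_le_two (fibSet (n + (e + 1)) (L + 2))
        (mem_fibSet (show 1 < L + 2 by omega)) (mem_fibSet (show 0 < L + 2 by omega)) _ _ _ heq
      refine le_trans h ?_
      simp only [Int.natAbs_mul, Int.natAbs_pow, Int.natAbs_neg, Int.natAbs_one, one_pow,
        one_mul, Int.natAbs_natCast]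
      calc Nat.fib (e + 1) + Nat.fib (e + 2) = Nat.fib (e + 3) := Nat.fib_add_two.symm
        _ ≤ Nat.fib (e + 3) := le_rfl
    · -- i = j + 1 : use fibL e (n+j+1)
      have hL := fibL e (n + (j + 1))
      have hs' : ((-1 : ℤ) ^ (e + 1)) * ((-1 : ℤ) ^ (e + 1)) = 1 := by
        rw [← pow_add]; exact Even.neg_one_pow ⟨e + 1, by ring⟩
      have heq : (Nat.fib (n + (j + 1)) : ℤ)
          = (Nat.fib (n + (e + 1) + (j + 1)) : ℤ) * ((-1 : ℤ) ^ (e + 1) * (Nat.fib e : ℤ))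
            + (Nat.fib (n + (e + 1) + j) : ℤ) * (-((-1 : ℤ) ^ (e + 1)) * (Nat.fib (e + 1) : ℤ)) := by
        rw [show n + (e + 1) + (j + 1) = n + (j + 1) + e + 1 from by omega,
          show n + (e + 1) + j = n + (j + 1) + e from by omega]
        linear_combination (-((-1 : ℤ) ^ (e + 1))) * hL - (Nat.fib (n + (j + 1)) : ℤ) * hs'
      have h := Q_le_two (fibSet (n + (e + 1)) (L + 2))
        (mem_fibSet hi) (mem_fibSet (show j < L + 2 by omega)) _ _ _ heq
      refine le_trans h ?_
      simp only [Int.natAbs_mul, Int.natAbs_pow, Int.natAbs_neg, Int.natAbs_one, one_pow,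
        one_mul, Int.natAbs_natCast]
      calc Nat.fib e + Nat.fib (e + 1) = Nat.fib (e + 2) := Nat.fib_add_two.symm
        _ ≤ Nat.fib (e + 3) := Nat.fib_le_fib_succ

lemma QSet_lower (n d L : ℕ) :
    Nat.fib (n + d + L + 1) ≤ Nat.fib (n + L + 1) * QSet (fibSet n (L + 2)) (fibSet (n + d) (L + 2)) := by
  have hmem : Nat.fib (n + d + (L + 1)) ∈ fibSet (n + d) (L + 2) := mem_fibSet (by omega)
  have hQ : Q (fibSet n (L + 2)) (Nat.fib (n + d + (L + 1)))
      ≤ QSet (fibSet n (L + 2)) (fibSet (n + d) (L + 2)) := Finset.le_sup hmem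
  refine le_trans ?_ (Nat.mul_le_mul_left _ hQ)
  have hne := Q_set_nonempty (fibSet n (L + 2)) (mem_fibSet (show 0 < L + 2 by omega))
    (mem_fibSet (show 1 < L + 2 by omega)) (Nat.fib_coprime_fib_succ n) (Nat.fib (n + d + (L + 1)))
  obtain ⟨x, hx, hq⟩ := Nat.sInf_mem hne
  have hq2 : Q (fibSet n (L + 2)) (Nat.fib (n + d + (L + 1))) = ∑ i ∈ fibSet n (L + 2), (x i).natAbs := hq
  rw [hq2]
  have h1 : (Nat.fib (n + d + (L + 1)) : ℤ)
      ≤ (Nat.fib (n + L + 1) : ℤ) * ∑ i ∈ fibSet n (L + 2), ((x i).natAbs : ℤ) := by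
    rw [hx, Finset.mul_sum]
    refine Finset.sum_le_sum ?_
    intro v hv'
    have hvle : (v : ℤ) ≤ (Nat.fib (n + L + 1) : ℤ) := by
      obtain ⟨j, hj, rfl⟩ := Finset.mem_image.1 hv'
      rw [Finset.mem_range] at hj
      exact_mod_cast Nat.fib_mono (Nat.add_le_add_left (Nat.lt_succ_iff.mp hj) n)
    calc (v : ℤ) * x v
        ≤ (v : ℤ) * |x v| :=
          mul_le_mul_of_nonneg_left (le_abs_self _) (by positivity)
      _ ≤ (Nat.fib (n + L + 1) : ℤ) * |x v| :=
          mul_le_mul_of_nonneg_right hvle (abs_nonneg _)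
      _ = (Nat.fib (n + L + 1) : ℤ) * ((x v).natAbs : ℤ) := by
          rw [Int.natCast_natAbs]
  exact_mod_cast h1

lemma key (L n d : ℕ) (hn : 1 ≤ n) :
    |((n + d : ℕ) : ℝ) - (n : ℝ)| - 1 ≤ dL (fibSet (n + d) (L + 2)) (fibSet n (L + 2)) ∧
    dL (fibSet (n + d) (L + 2)) (fibSet n (L + 2)) ≤ |((n + d : ℕ) : ℝ) - (n : ℝ)| + 1 := by
  obtain ⟨N, rfl⟩ : ∃ N, n = N + 1 := ⟨n - 1, by omega⟩
  set A := QSet (fibSet (N + 1) (L + 2)) (fibSet (N + 1 + d) (L + 2)) with hA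
  set B := QSet (fibSet (N + 1 + d) (L + 2)) (fibSet (N + 1) (L + 2)) with hB
  set M : ℕ := max A B with hM
  have hub : M ≤ Nat.fib (d + 2) := max_le (QSet_upper_A (N + 1) d L) (QSet_upper_B (N + 1) d L)
  have hlowN : Nat.fib (N + d + L + 2) ≤ Nat.fib (N + L + 2) * M := by
    have h1 := QSet_lower (N + 1) d L
    have h2 : Nat.fib (N + 1 + L + 1) * A ≤ Nat.fib (N + L + 2) * M := by
      have : N + 1 + L + 1 = N + L + 2 := by omega
      rw [this]
      exact Nat.mul_le_mul_left _ (le_max_left A B)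
    refine le_trans ?_ (le_trans h1 h2)
    exact Nat.fib_mono (by omega)
  have hM1 : goldenRatio ^ (N + d + L) ≤ goldenRatio ^ (N + L + 1) * (M : ℝ) := by
    calc goldenRatio ^ (N + d + L) ≤ (Nat.fib (N + d + L + 2) : ℝ) := pow_le_fib _
      _ ≤ (Nat.fib (N + L + 2) : ℝ) * (M : ℝ) := by exact_mod_cast hlowN
      _ ≤ goldenRatio ^ (N + L + 1) * (M : ℝ) := by
          refine mul_le_mul_of_nonneg_right ?_ (Nat.cast_nonneg M)
          exact fib_le_pow (N + L + 1)
  have hMpos : (0 : ℝ) < (M : ℝ) := by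
    nlinarith [pow_pos goldenRatio_pos (N + d + L), pow_pos goldenRatio_pos (N + L + 1)]
  have habs : |((N + 1 + d : ℕ) : ℝ) - ((N + 1 : ℕ) : ℝ)| = (d : ℝ) := by
    push_cast
    rw [show ((N : ℝ) + 1 + d - (N + 1)) = (d : ℝ) by ring]
    exact abs_of_nonneg (Nat.cast_nonneg d)
  have hdL : dL (fibSet (N + 1 + d) (L + 2)) (fibSet (N + 1) (L + 2))
      = Real.logb goldenRatio (M : ℝ) := by
    rw [dL]
    norm_num [hA, hB, hM]
  rw [hdL, habs]
  constructor
  · rw [Real.le_logb_iff_rpow_le one_lt_goldenRatio hMpos]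
    have h2 : goldenRatio ^ ((d : ℝ) - 1) * goldenRatio ^ (((N + L + 1 : ℕ)) : ℝ)
        = goldenRatio ^ (((N + d + L : ℕ)) : ℝ) := by
      rw [← Real.rpow_add goldenRatio_pos]
      congr 1
      push_cast
      ring
    have hM1' : goldenRatio ^ (((N + d + L : ℕ)) : ℝ)
        ≤ goldenRatio ^ (((N + L + 1 : ℕ)) : ℝ) * (M : ℝ) := by
      rw [Real.rpow_natCast, Real.rpow_natCast]
      exact hM1
    have hp : (0 : ℝ) < goldenRatio ^ (((N + L + 1 : ℕ)) : ℝ) := rpow_pos_of_pos goldenRatio_pos _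
    rw [← h2] at hM1'
    exact le_of_mul_le_mul_right (by linarith) hp
  · rw [Real.logb_le_iff_le_rpow one_lt_goldenRatio hMpos]
    have : ((d : ℝ) + 1) = (((d + 1 : ℕ)) : ℝ) := by push_cast; ring
    rw [this, Real.rpow_natCast]
    calc (M : ℝ) ≤ (Nat.fib (d + 2) : ℝ) := by exact_mod_cast hub
      _ ≤ goldenRatio ^ (d + 1) := fib_le_pow (d + 1)

/-- For `ℓ ≥ 2`, the map `n ↦ f_n^ℓ = {F_n, …, F_{n+ℓ-1}}` is a (1,1)-quasi-isometric
embedding of `(ℕ, |·|)` into `(𝒳^ℓ, d^ℓ)`: for all `m, n ≥ 1`,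
`|m - n| - 1 ≤ d^ℓ(f_m^ℓ, f_n^ℓ) ≤ |m - n| + 1`. -/
theorem stmt_19 (ℓ : ℕ) (hℓ : 2 ≤ ℓ) (m n : ℕ) (hm : 1 ≤ m) (hn : 1 ≤ n) :
    |(m : ℝ) - n| - 1 ≤ dL (fibSet m ℓ) (fibSet n ℓ) ∧
    dL (fibSet m ℓ) (fibSet n ℓ) ≤ |(m : ℝ) - n| + 1 := by
  obtain ⟨L, rfl⟩ : ∃ L, ℓ = L + 2 := ⟨ℓ - 2, by omega⟩
  rcases le_total n m with h | h
  · obtain ⟨d, rfl⟩ : ∃ d, m = n + d := ⟨m - n, by omega⟩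
    exact key L n d hn
  · obtain ⟨d, rfl⟩ : ∃ d, n = m + d := ⟨n - m, by omega⟩
    have hk := key L m d hm
    have hsymm : dL (fibSet m (L + 2)) (fibSet (m + d) (L + 2))
        = dL (fibSet (m + d) (L + 2)) (fibSet m (L + 2)) := by
      rw [dL, dL, max_comm]
    have habs2 : |(m : ℝ) - ((m + d : ℕ) : ℝ)| = |((m + d : ℕ) : ℝ) - (m : ℝ)| :=
      abs_sub_comm _ _
    rw [hsymm]
    push_cast at habs2 hk ⊢
    rw [habs2]
    exact hk
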